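/- For integers n₀ ≥ 2ℓ₀ ≥ 2 and m ≥ 1, there exists a family F ⊆ A(n₀,2ℓ₀,m) with |F| ≤ (1 + m·ln(C(2ℓ₀,ℓ₀))) · (C(n₀,ℓ₀)/C(2ℓ₀,ℓ₀))^m such that every S ∈ A(n₀,ℓ₀,m) is contained in some T ∈ F. -/

import Mathlib

open Finset


def blockEquiv {m n₀ : ℕ} (A : Fin m → Finset (Fin n₀)) (j : ℕ) :
    {S : Finset (Fin m × Fin n₀) //
      (∀ p ∈ S, p.2 ∈ A p.1) ∧ ∀ i, (S.filter fun p => p.1 = i).card = j} ≃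
    (∀ i : Fin m, {s : Finset (Fin n₀) // s ∈ (A i).powersetCard j}) where
  toFun S i := ⟨(S.1.filter fun p => p.1 = i).image Prod.snd, by
    rw [mem_powersetCard]
    constructor
    · intro x hx
      simp only [mem_image, mem_filter] at hx
      obtain ⟨p, ⟨hpS, hp1⟩, hp2⟩ := hx
      have := S.2.1 p hpS
      rwa [hp1, hp2] at this
    · rw [card_image_of_injOn]
      · exact S.2.2 i
      · intro p hp q hq h
        simp only [coe_filter, Set.mem_setOf_eq] at hp hq
        exact Prod.ext (hp.2.trans hq.2.symm) h⟩
  invFun f := ⟨univ.filter fun p => p.2 ∈ (f p.1).1, by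
    constructor
    · intro p hp
      simp only [mem_filter] at hp
      exact (mem_powersetCard.mp (f p.1).2).1 hp.2
    · intro i
      have : (univ.filter fun p : Fin m × Fin n₀ => p.2 ∈ (f p.1).1).filter
          (fun p => p.1 = i) = (f i).1.image (fun x => (i, x)) := by
        ext p
        simp only [mem_filter, mem_univ, true_and, mem_image]
        constructor
        · rintro ⟨h1, rfl⟩
          exact ⟨p.2, h1, rfl⟩
        · rintro ⟨x, hx, rfl⟩
          exact ⟨hx, rfl⟩
      rw [this, card_image_of_injective _ (fun a b h => (Prod.mk.injEq _ _ _ _).mp h |>.2),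
        (mem_powersetCard.mp (f i).2).2]⟩
  left_inv S := by
    apply Subtype.ext
    ext p
    simp only [mem_filter, mem_univ, true_and, mem_image]
    constructor
    · rintro ⟨q, ⟨hq, hq1⟩, hq2⟩
      rwa [show p = q from Prod.ext hq1.symm hq2.symm]
    · intro hp
      exact ⟨p, ⟨hp, rfl⟩, rfl⟩
  right_inv f := by
    funext i
    apply Subtype.ext
    ext x
    simp only [mem_image, mem_filter, mem_univ, true_and]
    constructor
    · rintro ⟨p, ⟨hp, hp1⟩, hp2⟩
      rw [← hp2, ← hp1]; exact hp
    · intro hx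
      exact ⟨(i, x), ⟨hx, rfl⟩, rfl⟩

lemma card_blockRestricted {m n₀ : ℕ} (A : Fin m → Finset (Fin n₀)) (j : ℕ) :
    (univ.filter fun S : Finset (Fin m × Fin n₀) =>
      (∀ p ∈ S, p.2 ∈ A p.1) ∧ ∀ i, (S.filter fun p => p.1 = i).card = j).card
    = ∏ i, ((A i).card.choose j) := by
  classical
  rw [← Fintype.card_subtype]
  rw [Fintype.card_congr (blockEquiv A j), Fintype.card_pi]
  congr 1
  funext i
  rw [Fintype.card_coe, card_powersetCard]

lemma card_blockSubsets {m n₀ : ℕ} (j : ℕ) :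
    (univ.filter fun S : Finset (Fin m × Fin n₀) =>
      ∀ i, (S.filter fun p => p.1 = i).card = j).card = (n₀.choose j) ^ m := by
  classical
  have := card_blockRestricted (fun _ : Fin m => (univ : Finset (Fin n₀))) j
  simp only [mem_univ, implies_true, true_and, card_univ, Fintype.card_fin,
    prod_const, card_univ] at this
  simpa using this

lemma card_supersets {m n₀ : ℕ} (j : ℕ) (S : Finset (Fin m × Fin n₀))
    (hS : ∀ i, (S.filter fun p => p.1 = i).card = j) :
    (univ.filter fun T : Finset (Fin m × Fin n₀) =>
      (∀ i, (T.filter fun p => p.1 = i).card = 2 * j) ∧ S ⊆ T).card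
    = ((n₀ - j).choose j) ^ m := by
  classical
  set A : Fin m → Finset (Fin n₀) :=
    fun i => univ \ (S.filter fun p => p.1 = i).image Prod.snd with hA
  have hAcard : ∀ i, (A i).card = n₀ - j := by
    intro i
    rw [hA, card_sdiff_of_subset (subset_univ _), card_univ, Fintype.card_fin,
      card_image_of_injOn, hS i]
    intro p hp q hq h
    simp only [coe_filter, Set.mem_setOf_eq] at hp hq
    exact Prod.ext (hp.2.trans hq.2.symm) h
  have key := card_blockRestricted A j
  simp only [hAcard, prod_const, card_univ, Fintype.card_fin] at key
  rw [← key]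
  apply Finset.card_bij (fun T _ => T \ S)
  · -- maps into
    intro T hT
    simp only [mem_filter, mem_univ, true_and] at hT ⊢
    obtain ⟨hTc, hST⟩ := hT
    constructor
    · intro p hp
      simp only [mem_sdiff] at hp
      simp only [hA, mem_sdiff, mem_univ, true_and, mem_image, mem_filter]
      rintro ⟨q, ⟨hqS, hq1⟩, hq2⟩
      exact hp.2 (by rwa [show p = q from Prod.ext hq1.symm hq2.symm])
    · intro i
      have hsub : S.filter (fun p => p.1 = i) ⊆ T.filter (fun p => p.1 = i) :=
        filter_subset_filter _ hST
      have : (T \ S).filter (fun p => p.1 = i)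
          = T.filter (fun p => p.1 = i) \ S.filter (fun p => p.1 = i) := by
        ext p; simp only [mem_filter, mem_sdiff]; tauto
      rw [this, card_sdiff_of_subset hsub, hTc i, hS i, two_mul, Nat.add_sub_cancel]
  · -- injective
    intro T hT T' hT' h
    simp only [mem_filter, mem_univ, true_and] at hT hT'
    have : T \ S ∪ S = T' \ S ∪ S := by rw [h]
    rwa [sdiff_union_of_subset hT.2, sdiff_union_of_subset hT'.2] at this
  · -- surjective
    intro R hR
    simp only [mem_filter, mem_univ, true_and] at hR
    obtain ⟨hRA, hRc⟩ := hR
    have hdisj : Disjoint R S := by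
      rw [disjoint_left]
      intro p hpR hpS
      have := hRA p hpR
      simp only [hA, mem_sdiff, mem_univ, true_and, mem_image, mem_filter] at this
      exact this ⟨p, ⟨hpS, rfl⟩, rfl⟩
    refine ⟨R ∪ S, ?_, ?_⟩
    · simp only [mem_filter, mem_univ, true_and]
      refine ⟨fun i => ?_, subset_union_right⟩
      have : (R ∪ S).filter (fun p => p.1 = i)
          = R.filter (fun p => p.1 = i) ∪ S.filter (fun p => p.1 = i) := by
        ext p; simp only [mem_filter, mem_union]; tauto
      rw [this, card_union_of_disjoint (disjoint_filter_filter hdisj), hRc i, hS i, two_mul]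
    · rw [union_sdiff_right, sdiff_eq_self_of_disjoint hdisj]

noncomputable def covB (q x : ℝ) : ℝ := if q * x ≤ 1 then x else (1 + Real.log (q * x)) / q

lemma log_ge_aux {x : ℝ} (hx : 0 < x) : 1 - 1/x ≤ Real.log x := by
  have h := Real.log_le_sub_one_of_pos (show (0:ℝ) < 1/x by positivity)
  rw [Real.log_div one_ne_zero (ne_of_gt hx), Real.log_one] at h
  linarith

lemma covB_step {q u c : ℝ} (hq0 : 0 < q) (hq1 : q ≤ 1) (hu : 1 ≤ u) (hc1 : 1 ≤ c)
    (hcu : q * u ≤ c) (hcu' : c ≤ u) : 1 + covB q (u - c) ≤ covB q u := by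
  have hu0 : (0:ℝ) < u := by linarith
  have huc : 0 ≤ u - c := by linarith
  unfold covB
  split_ifs with h1 h2 h2
  · linarith
  · -- q(u-c) ≤ 1, q*u > 1
    push_neg at h2
    set x := q * u with hx
    have hx1 : 1 < x := h2
    have hlogx : 1 - 1/x ≤ Real.log x := log_ge_aux (by linarith)
    rw [le_div_iff₀ hq0]
    -- goal : (1 + (u - c)) * q ≤ 1 + log x
    by_cases hcase : (1 - q) * x ≤ 1
    · -- u - c ≤ u(1-q) = x(1-q)/q ; show q + q(u-c) ≤ 1 + log x
      have h3 : u - c ≤ u * (1 - q) := by nlinarith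
      have h4 : (x - 1) * (1 - q) ≤ (x - 1) * (1/x) := by
        apply mul_le_mul_of_nonneg_left _ (by linarith)
        rw [le_div_iff₀ (by linarith : (0:ℝ) < x)]
        linarith
      have h5 : (x - 1) * (1/x) = 1 - 1/x := by field_simp
      have h6 : (x - 1) * (1 - q) ≤ Real.log x := by
        rw [h5] at h4; linarith
      have h7 : q * (u - c) ≤ x * (1 - q) := by
        calc q * (u - c) ≤ q * (u * (1 - q)) :=
          mul_le_mul_of_nonneg_left h3 (le_of_lt hq0)
        _ = x * (1 - q) := by ring
      nlinarith
    · -- (1-q)x > 1 : q < 1, x > 1/(1-q), log x ≥ q; u - c ≤ 1/q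
      push_neg at hcase
      have hq1' : q < 1 := by nlinarith
      have hxq : 1/(1-q) ≤ x := by
        rw [div_le_iff₀ (by linarith)]; nlinarith
      have h8 : Real.log (1 - q) ≤ -q := by
        have := Real.log_le_sub_one_of_pos (show (0:ℝ) < 1 - q by linarith)
        linarith
      have h9 : q ≤ Real.log x := by
        have := Real.log_le_log (one_div_pos.mpr (by linarith : (0:ℝ) < 1 - q)) hxq
        rw [Real.log_div one_ne_zero (by linarith : (1:ℝ) - q ≠ 0), Real.log_one] at this
        linarith
      have h10 : q * (u - c) ≤ 1 := h1
      nlinarith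
  · -- q(u-c) > 1 but q u ≤ 1: impossible
    exfalso; push_neg at h1; nlinarith
  · -- both > 1
    push_neg at h1 h2
    have huc0 : 0 < u - c := by nlinarith
    have hq1' : q < 1 := by
      by_contra h
      push_neg at h
      have : q = 1 := le_antisymm hq1 h
      rw [this] at hcu h1; simp at hcu h1; nlinarith
    have h3 : u - c ≤ u * (1 - q) := by nlinarith
    have h4 : Real.log (q * (u - c)) ≤ Real.log (q * u) + Real.log (1 - q) := by
      rw [← Real.log_mul (by positivity : q * u ≠ 0) (by linarith : (1:ℝ) - q ≠ 0)]
      apply Real.log_le_log (by positivity)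
      nlinarith
    have h8 : Real.log (1 - q) ≤ -q := by
      have := Real.log_le_sub_one_of_pos (show (0:ℝ) < 1 - q by linarith)
      linarith
    have key : 1 + Real.log (q * (u - c)) ≤ (1 + Real.log (q * u)) - q := by nlinarith
    have key2 : (1 + Real.log (q * (u - c))) / q ≤ ((1 + Real.log (q * u)) - q) / q := by
      gcongr
    rw [sub_div, div_self (ne_of_gt hq0)] at key2
    linarith

lemma cover_aux {α β : Type*} [DecidableEq α] [DecidableEq β] (V : Finset α) (C : Finset β)
    (R : β → α → Prop) [∀ b a, Decidable (R b a)] (D : ℕ) (hD : 0 < D)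
    (hdeg : ∀ a ∈ V, (C.filter fun b => R b a).card = D) :
    ∀ n : ℕ, ∀ U ⊆ V, U.card = n →
      ∃ F ⊆ C, (∀ a ∈ U, ∃ b ∈ F, R b a) ∧
        (F.card : ℝ) ≤ covB ((D : ℝ) / (C.card : ℝ)) n := by
  intro n
  induction n using Nat.strong_induction_on with
  | _ n ih =>
    intro U hUV hUcard
    rcases Finset.eq_empty_or_nonempty U with h | h
    · refine ⟨∅, empty_subset _, by simp [h], ?_⟩
      subst hUcard
      simp [h, covB]
    obtain ⟨a₀, ha₀⟩ := h
    have hM : 0 < C.card := by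
      have := hdeg a₀ (hUV ha₀)
      have : (C.filter fun b => R b a₀).Nonempty := by
        rw [← card_pos, this]; exact hD
      obtain ⟨b, hb⟩ := this
      exact card_pos.mpr ⟨b, (mem_filter.mp hb).1⟩
    set M := C.card with hMdef
    have hu1 : 1 ≤ U.card := card_pos.mpr ⟨a₀, ha₀⟩
    -- double counting
    have hsum : ∑ b ∈ C, (U.filter fun a => R b a).card = U.card * D := by
      simp only [card_filter]
      rw [Finset.sum_comm]
      have : ∀ a ∈ U, (∑ b ∈ C, if R b a then 1 else 0) = D := by
        intro a ha
        rw [← card_filter]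
        exact hdeg a (hUV ha)
      rw [Finset.sum_congr rfl this, Finset.sum_const, smul_eq_mul]
    -- exists good b
    have hex : ∃ b ∈ C, U.card * D ≤ (U.filter fun a => R b a).card * M := by
      by_contra hcon
      push_neg at hcon
      have hlt : ∑ b ∈ C, (U.filter fun a => R b a).card * M
          < ∑ _b ∈ C, U.card * D :=
        Finset.sum_lt_sum_of_nonempty (card_pos.mp hM) hcon
      rw [← Finset.sum_mul, hsum, Finset.sum_const, smul_eq_mul] at hlt
      rw [mul_comm] at hlt
      exact lt_irrefl _ hlt
    obtain ⟨b, hbC, hb⟩ := hex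
    set c := (U.filter fun a => R b a).card with hcdef
    have hc1 : 1 ≤ c := by
      rcases Nat.eq_zero_or_pos c with h0 | h0
      · exfalso
        rw [h0, Nat.zero_mul] at hb
        have := Nat.mul_pos (show 0 < U.card from hu1) hD
        omega
      · exact h0
    have hcn : c ≤ n := hUcard ▸ (card_filter_le U _)
    set U' := U.filter (fun a => ¬ R b a) with hU'def
    have hU'card : U'.card = n - c := by
      have hsplit := Finset.card_filter_add_card_filter_not (s := U) (p := fun a => R b a)
      rw [← hcdef, ← hU'def, hUcard] at hsplit
      omega
    have hU'lt : U'.card < n := by omega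
    obtain ⟨F', hF'C, hF'cov, hF'card⟩ := ih U'.card hU'lt U'
      ((filter_subset _ _).trans hUV) rfl
    refine ⟨insert b F', insert_subset hbC hF'C, ?_, ?_⟩
    · intro a ha
      by_cases hR : R b a
      · exact ⟨b, mem_insert_self _ _, hR⟩
      · obtain ⟨b', hb', hRb'⟩ := hF'cov a (mem_filter.mpr ⟨ha, hR⟩)
        exact ⟨b', mem_insert_of_mem hb', hRb'⟩
    · have hcard : ((insert b F').card : ℝ) ≤ (F'.card : ℝ) + 1 := by
        exact_mod_cast card_insert_le b F'
      have hq0 : (0:ℝ) < (D:ℝ) / M := by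
        apply div_pos <;> exact_mod_cast (by assumption)
      have hDM : D ≤ M := by
        rw [← hdeg a₀ (hUV ha₀)]; exact card_filter_le _ _
      have hq1 : (D:ℝ) / M ≤ 1 := by
        rw [div_le_one (by exact_mod_cast hM)]; exact_mod_cast hDM
      have hn1 : (1:ℝ) ≤ (n:ℝ) := by exact_mod_cast hUcard ▸ hu1
      have hc1' : (1:ℝ) ≤ (c:ℝ) := by exact_mod_cast hc1
      have hcn' : (c:ℝ) ≤ (n:ℝ) := by exact_mod_cast hcn
      have hcu : (D:ℝ) / M * n ≤ c := by
        rw [div_mul_eq_mul_div, div_le_iff₀ (by exact_mod_cast hM : (0:ℝ) < (M:ℝ))]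
        calc (D:ℝ) * n = (n * D : ℕ) := by push_cast; ring
        _ ≤ (c * M : ℕ) := by exact_mod_cast hUcard ▸ hb
        _ = (c:ℝ) * M := by push_cast; ring
      have hstep := covB_step hq0 hq1 hn1 hc1' hcu hcn'
      have hcast : ((n - c : ℕ) : ℝ) = (n:ℝ) - (c:ℝ) := by
        exact Nat.cast_sub hcn
      rw [hU'card, hcast] at hF'card
      linarith

/-- The collection of subsets of the ground set `Fin m × Fin n₀` (partitioned into `m`
blocks `{i} × Fin n₀` of size `n₀`) having exactly `j` elements in each block. -/
def blockSubsets (n₀ j m : ℕ) : Set (Finset (Fin m × Fin n₀)) :=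
  {S | ∀ i : Fin m, (S.filter (fun p => p.1 = i)).card = j}

/-- Block-structured covering design: there is a family `F ⊆ A(n₀,2ℓ₀,m)` of size at most
`(1 + m ln (2ℓ₀ choose ℓ₀)) · ((n₀ choose ℓ₀)/(2ℓ₀ choose ℓ₀))^m` covering every member
of `A(n₀,ℓ₀,m)`. -/
theorem block_covering_design (n₀ ℓ₀ m : ℕ) (hℓ : 1 ≤ ℓ₀) (hn : 2 * ℓ₀ ≤ n₀)
    (hm : 1 ≤ m) :
    ∃ F : Finset (Finset (Fin m × Fin n₀)),
      (∀ T ∈ F, T ∈ blockSubsets n₀ (2 * ℓ₀) m) ∧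
      (F.card : ℝ) ≤ (1 + (m : ℝ) * Real.log (Nat.choose (2 * ℓ₀) ℓ₀)) *
        ((Nat.choose n₀ ℓ₀ : ℝ) / (Nat.choose (2 * ℓ₀) ℓ₀ : ℝ)) ^ m ∧
      ∀ S ∈ blockSubsets n₀ ℓ₀ m, ∃ T ∈ F, S ⊆ T := by
  classical
  have hln2 : ℓ₀ ≤ n₀ - ℓ₀ := by omega
  set V : Finset (Finset (Fin m × Fin n₀)) :=
    univ.filter (fun S => ∀ i, (S.filter fun p => p.1 = i).card = ℓ₀) with hV
  set C : Finset (Finset (Fin m × Fin n₀)) :=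
    univ.filter (fun S => ∀ i, (S.filter fun p => p.1 = i).card = 2 * ℓ₀) with hC
  have hDpos : 0 < ((n₀ - ℓ₀).choose ℓ₀) ^ m := pow_pos (Nat.choose_pos hln2) m
  have hdeg : ∀ S ∈ V, (C.filter fun T => S ⊆ T).card = ((n₀ - ℓ₀).choose ℓ₀) ^ m := by
    intro S hS
    rw [hC, filter_filter]
    rw [hV, mem_filter] at hS
    exact card_supersets ℓ₀ S hS.2
  obtain ⟨F, hFC, hFcov, hFcard⟩ :=
    cover_aux V C (fun T S => S ⊆ T) _ hDpos hdeg V.card V Finset.Subset.rfl rfl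
  have hVcard : V.card = (n₀.choose ℓ₀) ^ m := card_blockSubsets ℓ₀
  have hCcard : C.card = (n₀.choose (2 * ℓ₀)) ^ m := card_blockSubsets (2 * ℓ₀)
  refine ⟨F, ?_, ?_, ?_⟩
  · intro T hT
    have := hFC hT
    rw [hC, mem_filter] at this
    exact this.2
  · -- size bound
    have hd2 : 2 ≤ (2 * ℓ₀).choose ℓ₀ := by
      obtain ⟨k, rfl⟩ : ∃ k, ℓ₀ = k + 1 := ⟨ℓ₀ - 1, by omega⟩
      have h1 : 0 < (2 * k + 1).choose k := Nat.choose_pos (by omega)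
      have h2 : 0 < (2 * k + 1).choose (k + 1) := Nat.choose_pos (by omega)
      have h3 : (2 * (k + 1)).choose (k + 1)
          = (2 * k + 1).choose k + (2 * k + 1).choose (k + 1) := by
        rw [show 2 * (k + 1) = (2 * k + 1) + 1 by ring]
        exact Nat.choose_succ_succ _ _
      omega
    have hid : n₀.choose (2 * ℓ₀) * (2 * ℓ₀).choose ℓ₀
        = n₀.choose ℓ₀ * (n₀ - ℓ₀).choose ℓ₀ := by
      have := Nat.choose_mul (n := n₀) (k := 2 * ℓ₀) (s := ℓ₀) (by omega)
      simpa [show 2 * ℓ₀ - ℓ₀ = ℓ₀ by omega] using this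
    rw [hVcard, hCcard] at hFcard
    set Nr : ℝ := ((n₀.choose ℓ₀ : ℕ) : ℝ) with hNr
    set Dr : ℝ := (((n₀ - ℓ₀).choose ℓ₀ : ℕ) : ℝ) with hDr
    set Mr : ℝ := ((n₀.choose (2 * ℓ₀) : ℕ) : ℝ) with hMr
    set dr : ℝ := (((2 * ℓ₀).choose ℓ₀ : ℕ) : ℝ) with hdr
    push_cast at hFcard
    have hdrpos : (0:ℝ) < dr := by rw [hdr]; exact_mod_cast lt_of_lt_of_le two_pos hd2
    have hMpos : (0:ℝ) < Mr := by rw [hMr]; exact_mod_cast Nat.choose_pos hn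
    have hNpos : (0:ℝ) < Nr := by
      rw [hNr]; exact_mod_cast Nat.choose_pos (show ℓ₀ ≤ n₀ by omega)
    have hDrpos : (0:ℝ) < Dr := by rw [hDr]; exact_mod_cast Nat.choose_pos hln2
    have hidr : Mr * dr = Nr * Dr := by
      rw [hMr, hdr, hNr, hDr]; exact_mod_cast hid
    have hpow : Mr ^ m * dr ^ m = Nr ^ m * Dr ^ m := by
      rw [← mul_pow, ← mul_pow, hidr]
    have hq : Dr ^ m / Mr ^ m * Nr ^ m = dr ^ m := by
      rw [div_mul_eq_mul_div, div_eq_iff (by positivity : Mr ^ m ≠ 0)]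
      linear_combination (-1 : ℝ) * hpow
    have h1lt : (1:ℝ) < Dr ^ m / Mr ^ m * Nr ^ m := by
      rw [hq]
      have h2le : (2:ℝ) ≤ dr := by rw [hdr]; exact_mod_cast hd2
      calc (1:ℝ) < 2 := one_lt_two
      _ ≤ dr := h2le
      _ ≤ dr ^ m := le_self_pow₀ (by linarith) (by omega)
    rw [covB, if_neg (not_le.mpr h1lt), hq] at hFcard
    refine hFcard.trans (le_of_eq ?_)
    rw [Real.log_pow, div_pow]
    have hD0 : Dr ^ m ≠ 0 := by positivity
    have hd0 : dr ^ m ≠ 0 := by positivity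
    have hM0 : Mr ^ m ≠ 0 := by positivity
    rw [← hDr, ← hMr]
    field_simp
    linear_combination (1 + (m:ℝ) * Real.log dr) * hpow
  · intro S hS
    refine hFcov S ?_
    rw [hV, mem_filter]
    exact ⟨mem_univ S, hS⟩
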